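/- For every n ∈ ℕ and every x ∈ ℝ, Σ_{j=1−n}^{n} Γ_j(x)^2 < 6. -/

import Mathlib

open Real Set MeasureTheory

noncomputable def trigPi (s : ℕ) (y : ℤ → ℝ) (x : ℝ) : ℝ :=
  ∏ i ∈ Finset.range (2 * s), Real.sin ((x - y ((i : ℤ) + 1)) / 2)

noncomputable def xnode (n : ℕ) (j : ℤ) : ℝ := -(j : ℝ) * (Real.pi / n)

noncomputable def jIdx (y : ℤ → ℝ) (n : ℕ) (i : ℤ) : ℤ := ⌈-(y i) * n / Real.pi⌉

noncomputable def Oint (y : ℤ → ℝ) (n m : ℕ) (i : ℤ) : Set ℝ :=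
  Set.Ioo (xnode n (jIdx y n i + m + 1)) (xnode n (jIdx y n i - m))

noncomputable def Oall (y : ℤ → ℝ) (n m : ℕ) : Set ℝ := ⋃ i : ℤ, Oint y n m i

def memH (y : ℤ → ℝ) (n m : ℕ) (j : ℤ) : Prop := xnode n j ∉ Oall y n m

noncomputable def Gam (n : ℕ) (j : ℤ) (x : ℝ) : ℝ :=
  min 1 (1 / (n * |Real.sin ((x - (xnode n j + Real.pi / n / 2)) / 2)|))

noncomputable def Jker (n b : ℕ) (j : ℤ) (x : ℝ) : ℝ :=
  (Real.sin (n * (x - xnode n j) / 2) / Real.sin ((x - xnode n j) / 2)) ^ (2 * b) +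
    (Real.sin (n * (x - xnode n (j - 1)) / 2) / Real.sin ((x - xnode n (j - 1)) / 2)) ^ (2 * b)

noncomputable def tfun (s : ℕ) (y : ℤ → ℝ) (n b : ℕ) (j : ℤ) (x : ℝ) : ℝ :=
  (∫ u in (xnode n j - Real.pi)..x, Jker n b j u * trigPi s y u) /
    (∫ u in (xnode n j - Real.pi)..(xnode n j + Real.pi), Jker n b j u * trigPi s y u)

noncomputable def chiFun (n : ℕ) (j : ℤ) (x : ℝ) : ℝ := if x ≤ xnode n j then 0 else 1

def IsTrigPoly (m : ℕ) (P : ℝ → ℝ) : Prop :=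
  ∃ a b : ℕ → ℝ, ∀ x : ℝ,
    P x = a 0 + ∑ k ∈ Finset.Icc 1 m, (a k * Real.cos (k * x) + b k * Real.sin (k * x))

noncomputable def omegaMod (k : ℕ) (f : ℝ → ℝ) (t : ℝ) : ℝ :=
  sSup {v : ℝ | ∃ δ x : ℝ, 0 < δ ∧ δ ≤ t ∧
    v = |∑ i ∈ Finset.range (k + 1), (-1 : ℝ) ^ (k - i) * (k.choose i : ℝ) * f (x + i * δ)|}

noncomputable def taufun (s : ℕ) (y : ℤ → ℝ) (n b : ℕ) (j : ℤ) (α : ℝ) (x : ℝ) : ℝ :=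
  α * (∫ u in (xnode n j - Real.pi)..x, tfun s y n b (j + 10) u) +
    (1 - α) * (∫ u in (xnode n j - Real.pi)..x, tfun s y n b (j - 10) u)

noncomputable def PsiCap (a ht hh x : ℝ) : ℝ :=
  max (x - a) 0 ^ 3 + 3 * ht * max (x - a) 0 ^ 2 + hh * max (x - a) 0

noncomputable def qPoly (dj h x : ℝ) : ℝ :=
  x ^ 4 / (8 * Real.pi) + ((Real.pi - dj) / (2 * Real.pi)) * x ^ 3 +
    ((5 * dj ^ 2 - 6 * dj * Real.pi - h ^ 2) / (4 * Real.pi)) * x ^ 2 +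
    ((Real.pi - dj) * (5 * dj ^ 2 - 2 * Real.pi ^ 2 - h ^ 2) / (2 * Real.pi)) * x

noncomputable def fbb (t : ℝ) : ℝ := 1 / (max 1 t) ^ 2

lemma fbb_nonneg (t : ℝ) : 0 ≤ fbb t := by unfold fbb; positivity

lemma sum_fbb_le (N : ℕ) (hN : 2 ≤ N) :
    ∑ k ∈ Finset.range N, fbb k ≤ 3 - 1 / ((N : ℝ) - 1) := by
  induction N with
  | zero => omega
  | succ N ih =>
    rcases Nat.lt_or_ge N 2 with h | h
    · interval_cases N
      · omega
      · norm_num [Finset.sum_range_succ, fbb]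
    · have hsum := ih h
      rw [Finset.sum_range_succ]
      have hN1 : (1:ℝ) ≤ (N:ℝ) := by exact_mod_cast Nat.one_le_of_lt h
      have hN2 : (2:ℝ) ≤ (N:ℝ) := by exact_mod_cast h
      have hstep : fbb N ≤ 1 / ((N:ℝ) - 1) - 1 / (N:ℝ) := by
        unfold fbb
        rw [max_eq_right hN1]
        rw [div_sub_div _ _ (by linarith) (by linarith)]
        rw [div_le_div_iff₀ (by positivity) (by nlinarith)]
        nlinarith
      push_cast
      rw [show ((N:ℝ) + 1 - 1) = (N:ℝ) by ring]
      linarith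

lemma gam_sq_le (n : ℕ) (hn : 0 < n) (x : ℝ) (j : ℤ) :
    Gam n j x ^ 2 ≤
      fbb (((⌊x * n / Real.pi - 1/2⌋ + j) % (2 * n) : ℤ) : ℝ) +
      fbb ((2 * (n:ℤ) - 1 - (⌊x * n / Real.pi - 1/2⌋ + j) % (2 * n) : ℤ) : ℝ) := by
  have hnR : (0:ℝ) < n := by exact_mod_cast hn
  have hπ := Real.pi_pos
  set T : ℝ := x * n / Real.pi - 1/2 with hT
  set m : ℤ := ⌊T⌋ with hm
  set k : ℤ := (m + j) % (2 * n) with hk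
  set q : ℤ := (m + j) / (2 * n) with hq
  have h2n : (0:ℤ) < 2 * n := by positivity
  have hk0 : 0 ≤ k := Int.emod_nonneg _ (by omega)
  have hk2n : k < 2 * n := Int.emod_lt_of_pos _ h2n
  have hdm : (2 * (n:ℤ)) * q + k = m + j := Int.mul_ediv_add_emod _ _
  set r : ℝ := Int.fract T with hr
  have hr0 : 0 ≤ r := Int.fract_nonneg T
  have hr1 : r < 1 := Int.fract_lt_one T
  set ψ : ℝ := (Real.pi / (2 * n)) * (k + r) with hψ
  -- the angle equals ψ + q * π
  have hangle : (x - (xnode n j + Real.pi / n / 2)) / 2 = ψ + q * Real.pi := by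
    have hTm : (m : ℝ) + r = T := by
      rw [hr]; unfold Int.fract; push_cast; ring
    have hmj : ((m : ℝ) + j) = 2 * n * q + k := by exact_mod_cast hdm.symm
    have hkr : (k : ℝ) + r = T + j - 2 * n * q := by
      have hkk : (k:ℝ) = (m:ℝ) + j - 2*n*q := by linarith [hmj]
      rw [hkk]; linarith [hTm]
    rw [hψ, hkr, hT]
    unfold xnode
    field_simp
    ring
  have habs : |Real.sin ((x - (xnode n j + Real.pi / n / 2)) / 2)| = |Real.sin ψ| := by
    rw [hangle, Real.sin_add_int_mul_pi, abs_mul]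
    have h1 : |(-1:ℝ) ^ q| = 1 := by
      rcases Int.even_or_odd q with h | h
      · rw [h.neg_one_zpow, abs_one]
      · rw [h.neg_one_zpow, abs_neg, abs_one]
    rw [h1, one_mul]
  -- bounds on ψ
  have hkR : (0:ℝ) ≤ (k:ℝ) := by exact_mod_cast hk0
  have hk2n' : k ≤ 2 * (n:ℤ) - 1 := by omega
  have hkR2 : (k:ℝ) ≤ 2*(n:ℝ) - 1 := by exact_mod_cast hk2n'
  have hψ0 : 0 ≤ ψ := mul_nonneg (by positivity) (by linarith)
  have hψπ : ψ < Real.pi := by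
    rw [hψ]
    calc Real.pi / (2*n) * ((k:ℝ) + r) < Real.pi / (2*n) * (2*n) :=
          mul_lt_mul_of_pos_left (by linarith) (by positivity)
      _ = Real.pi := by field_simp
  have hsinψ : 0 ≤ Real.sin ψ := Real.sin_nonneg_of_nonneg_of_le_pi hψ0 hψπ.le
  -- key: μ ≤ n * sin ψ
  set μ : ℤ := min k (2 * n - 1 - k) with hμ
  have hkey : (μ : ℝ) ≤ n * Real.sin ψ := by
    rcases le_or_gt ψ (Real.pi / 2) with hc | hc
    · have h1 : 2 / Real.pi * ψ ≤ Real.sin ψ := Real.mul_le_sin hψ0 hc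
      have h2 : 2 / Real.pi * ψ = ((k:ℝ) + r) / n := by
        rw [hψ]; field_simp
      rw [h2, div_le_iff₀ hnR] at h1
      have hμk : (μ:ℝ) ≤ (k:ℝ) := by exact_mod_cast min_le_left k (2*n-1-k)
      nlinarith
    · have h1 : 2 / Real.pi * (Real.pi - ψ) ≤ Real.sin (Real.pi - ψ) :=
        Real.mul_le_sin (by linarith) (by linarith)
      rw [Real.sin_pi_sub] at h1
      have h2 : 2 / Real.pi * (Real.pi - ψ) = (2 * n - ((k:ℝ) + r)) / n := by
        rw [hψ]; field_simp
      rw [h2, div_le_iff₀ hnR] at h1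
      have hμk : (μ:ℝ) ≤ 2*(n:ℝ) - 1 - (k:ℝ) := by exact_mod_cast min_le_right k (2*n-1-k)
      nlinarith
  -- bound Gam
  have hGam0 : 0 ≤ Gam n j x := le_min zero_le_one (by positivity)
  have hGle : Gam n j x ≤ 1 / max 1 (μ:ℝ) := by
    rcases le_or_gt (μ:ℝ) 1 with h | h
    · rw [max_eq_left h, div_one]
      unfold Gam
      exact min_le_left _ _
    · rw [max_eq_right h.le]
      refine (min_le_right _ _).trans ?_
      unfold Gam at *
      rw [habs, abs_of_nonneg hsinψ]
      apply one_div_le_one_div_of_le (by linarith) hkey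
  have hsq : Gam n j x ^ 2 ≤ fbb (μ:ℝ) := by
    have := pow_le_pow_left₀ hGam0 hGle 2
    calc Gam n j x ^ 2 ≤ (1 / max 1 (μ:ℝ)) ^ 2 := this
      _ = fbb (μ:ℝ) := by unfold fbb; rw [div_pow, one_pow]
  rcases le_total k (2*(n:ℤ) - 1 - k) with h | h
  · rw [hμ, min_eq_left h] at hsq
    exact hsq.trans (le_add_of_nonneg_right (fbb_nonneg _))
  · rw [hμ, min_eq_right h] at hsq
    exact hsq.trans (le_add_of_nonneg_left (fbb_nonneg _))

theorem stmt7_gamma_sum_bound (n : ℕ) (hn : 0 < n) (x : ℝ) :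
    ∑ j ∈ Finset.Icc (1 - (n : ℤ)) (n : ℤ), Gam n j x ^ 2 < 6 := by
  have hnR : (0:ℝ) < n := by exact_mod_cast hn
  set m : ℤ := ⌊x * n / Real.pi - 1/2⌋ with hm
  have h2n : (0:ℤ) < 2 * n := by positivity
  have step1 : ∑ j ∈ Finset.Icc (1 - (n:ℤ)) (n:ℤ), Gam n j x ^ 2 ≤
      ∑ j ∈ Finset.Icc (1 - (n:ℤ)) (n:ℤ),
        (fbb (((m + j) % (2 * n) : ℤ) : ℝ) + fbb ((2 * (n:ℤ) - 1 - (m + j) % (2 * n) : ℤ) : ℝ)) :=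
    Finset.sum_le_sum fun j _ => gam_sq_le n hn x j
  have step2 : ∑ j ∈ Finset.Icc (1 - (n:ℤ)) (n:ℤ),
        (fbb (((m + j) % (2 * n) : ℤ) : ℝ) + fbb ((2 * (n:ℤ) - 1 - (m + j) % (2 * n) : ℤ) : ℝ)) =
      ∑ k ∈ Finset.range (2 * n),
        (fbb ((k:ℤ) : ℝ) + fbb ((2 * (n:ℤ) - 1 - (k:ℤ)) : ℝ)) := by
    refine Finset.sum_bij' (fun j _ => ((m + j) % (2 * n)).toNat)
      (fun k _ => ((k : ℤ) - m - (1 - n)) % (2 * n) + (1 - n)) ?_ ?_ ?_ ?_ ?_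
    · intro a ha
      simp only [Finset.mem_range]
      have h1 : 0 ≤ (m + a) % (2 * n) := Int.emod_nonneg _ (by omega)
      have h2 : (m + a) % (2 * n) < 2 * n := Int.emod_lt_of_pos _ h2n
      omega
    · intro a ha
      simp only [Finset.mem_Icc]
      have h1 : 0 ≤ ((a:ℤ) - m - (1 - n)) % (2 * n) := Int.emod_nonneg _ (by omega)
      have h2 : ((a:ℤ) - m - (1 - n)) % (2 * n) < 2 * n := Int.emod_lt_of_pos _ h2n
      omega
    · intro a ha
      simp only [Finset.mem_Icc] at ha
      show ((((m + a) % (2 * n)).toNat : ℤ) - m - (1 - n)) % (2 * n) + (1 - n) = a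
      have h1 : 0 ≤ (m + a) % (2 * n) := Int.emod_nonneg _ (by omega)
      rw [Int.toNat_of_nonneg h1,
        show (m + a) % (2 * (n:ℤ)) - m - (1 - n) = (m + a) % (2 * n) + (-m - (1 - n)) by ring,
        Int.emod_add_emod,
        show m + a + (-m - (1 - (n:ℤ))) = a - (1 - n) by ring,
        Int.emod_eq_of_lt (by omega) (by omega)]
      ring
    · intro a ha
      simp only [Finset.mem_range] at ha
      show (((m + (((a:ℤ) - m - (1 - n)) % (2 * n) + (1 - n))) % (2 * n)).toNat) = a
      rw [show m + (((a:ℤ) - m - (1 - n)) % (2 * n) + (1 - n))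
            = ((a:ℤ) - m - (1 - n)) % (2 * n) + (m + (1 - n)) by ring,
        Int.emod_add_emod,
        show (a:ℤ) - m - (1 - n) + (m + (1 - n)) = a by ring,
        Int.emod_eq_of_lt (by omega) (by omega)]
      omega
    · intro a ha
      have h1 : 0 ≤ (m + a) % (2 * n) := Int.emod_nonneg _ (by omega)
      push_cast [Int.toNat_of_nonneg h1]
      ring_nf
  have hsum : ∑ k ∈ Finset.range (2 * n),
        (fbb ((k:ℤ) : ℝ) + fbb ((2 * (n:ℤ) - 1 - (k:ℤ)) : ℝ)) =
      2 * ∑ k ∈ Finset.range (2 * n), fbb k := by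
    rw [Finset.sum_add_distrib]
    have hrefl : ∑ k ∈ Finset.range (2 * n), fbb ((2 * (n:ℤ) - 1 - (k:ℤ)) : ℝ) =
        ∑ k ∈ Finset.range (2 * n), fbb k := by
      rw [← Finset.sum_range_reflect (fun k => fbb k) (2 * n)]
      apply Finset.sum_congr rfl
      intro k hk
      rw [Finset.mem_range] at hk
      congr 1
      rw [Nat.cast_sub (by omega : k ≤ 2 * n - 1), Nat.cast_sub (by omega : 1 ≤ 2 * n)]
      push_cast
      ring
    rw [hrefl]
    have : ∑ k ∈ Finset.range (2*n), fbb ((k:ℤ):ℝ) = ∑ k ∈ Finset.range (2*n), fbb k := by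
      apply Finset.sum_congr rfl; intro k _; norm_num
    rw [this]; ring
  have h2nge : 2 ≤ 2 * n := by omega
  have hfin : ∑ k ∈ Finset.range (2 * n), fbb k ≤ 3 - 1 / ((2 * n : ℝ) - 1) :=
    by exact_mod_cast sum_fbb_le (2 * n) h2nge
  have hn1 : (1:ℝ) ≤ (n:ℝ) := by exact_mod_cast hn
  have hpos : 0 < 1 / ((2 * (n:ℝ)) - 1) := by
    apply div_pos one_pos; linarith
  calc ∑ j ∈ Finset.Icc (1 - (n:ℤ)) (n:ℤ), Gam n j x ^ 2
      ≤ 2 * ∑ k ∈ Finset.range (2 * n), fbb k := by rw [← hsum, ← step2]; exact step1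
    _ ≤ 2 * (3 - 1 / ((2 * n : ℝ) - 1)) := by linarith
    _ < 6 := by linarith
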